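/- Let K be a field of characteristic zero, let n ≥ 1, k ≥ 0, let a ∈ K[x][t]^n be a vector of polynomials and let B_0, …, B_k ∈ K[x][t]^{n×n} be matrices of polynomials. Then the functional equation f = a + t·Σ_{i=0}^{k} B_i·Δ^i f has exactly one solution f in K[x][[t]]^n; its t-coefficients are determined by the recursion [t^0]f = [t^0]a and [t^{N+1}]f = [t^{N+1}]a + Σ_{i=0}^{k} Σ_{j=0}^{N} ([t^j]B_i)·Δ^i([t^{N−j}]f) for all N ∈ ℕ. -/

import Mathlib

/-- The operator `Δ` on `K[x][[t]]` defined by `Δf = (f − f(0,t))/x`,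
acting on each `t`-coefficient (a polynomial in `x`) as `divX`. -/
noncomputable def seriesDelta {K : Type*} [CommRing K] (f : PowerSeries (Polynomial K)) :
    PowerSeries (Polynomial K) :=
  PowerSeries.mk fun N => (PowerSeries.coeff N f).divX

lemma coeff_seriesDelta_iter {K : Type*} [CommRing K] (i N : ℕ) (f : PowerSeries (Polynomial K)) :
    PowerSeries.coeff N (seriesDelta^[i] f) =
      (Polynomial.divX)^[i] (PowerSeries.coeff N f) := by
  induction i generalizing f with
  | zero => simp
  | succ i ih =>
    rw [Function.iterate_succ_apply, ih, Function.iterate_succ_apply]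
    simp [seriesDelta]

noncomputable def solCoeff {K : Type*} [Field K] {n : ℕ} (k : ℕ)
    (a : Fin n → Polynomial (Polynomial K))
    (B : ℕ → Matrix (Fin n) (Fin n) (Polynomial (Polynomial K))) : ℕ → Fin n → Polynomial K
  | 0 => fun p => (a p).coeff 0
  | (N+1) => fun p => (a p).coeff (N+1) + ∑ i ∈ Finset.range (k+1), ∑ j ∈ Finset.range (N+1),
      ∑ l, (B i p l).coeff j * (Polynomial.divX)^[i] (solCoeff k a B (N-j) l)
  decreasing_by exact Nat.lt_succ_of_le (Nat.sub_le N j)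

lemma coeff_rhs_zero {K : Type*} [Field K] {n : ℕ} (k : ℕ)
    (a : Fin n → Polynomial (Polynomial K))
    (B : ℕ → Matrix (Fin n) (Fin n) (Polynomial (Polynomial K)))
    (f : Fin n → PowerSeries (Polynomial K)) (p : Fin n) :
    PowerSeries.coeff 0 ((a p : PowerSeries (Polynomial K)) +
      PowerSeries.X * ∑ i ∈ Finset.range (k + 1), ∑ l,
        (B i p l : PowerSeries (Polynomial K)) * seriesDelta^[i] (f l)) = (a p).coeff 0 := by
  simp [Polynomial.coeff_coe]

lemma coeff_rhs_succ {K : Type*} [Field K] {n : ℕ} (k : ℕ)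
    (a : Fin n → Polynomial (Polynomial K))
    (B : ℕ → Matrix (Fin n) (Fin n) (Polynomial (Polynomial K)))
    (f : Fin n → PowerSeries (Polynomial K)) (p : Fin n) (N : ℕ) :
    PowerSeries.coeff (N + 1) ((a p : PowerSeries (Polynomial K)) +
      PowerSeries.X * ∑ i ∈ Finset.range (k + 1), ∑ l,
        (B i p l : PowerSeries (Polynomial K)) * seriesDelta^[i] (f l)) =
    (a p).coeff (N + 1) +
        ∑ i ∈ Finset.range (k + 1), ∑ j ∈ Finset.range (N + 1), ∑ l,
          (B i p l).coeff j * (Polynomial.divX)^[i] (PowerSeries.coeff (N - j) (f l)) := by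
  rw [map_add, PowerSeries.coeff_succ_X_mul, Polynomial.coeff_coe]
  congr 1
  rw [map_sum]
  refine Finset.sum_congr rfl fun i _ => ?_
  rw [map_sum, Finset.sum_comm]
  refine Finset.sum_congr rfl fun l _ => ?_
  rw [PowerSeries.coeff_mul, Finset.Nat.sum_antidiagonal_eq_sum_range_succ_mk]
  refine Finset.sum_congr rfl fun j _ => ?_
  rw [Polynomial.coeff_coe, coeff_seriesDelta_iter]

theorem unique_solution_of_linear_delta_system
    (K : Type*) [Field K] [CharZero K] (n k : ℕ) (hn : 1 ≤ n)
    (a : Fin n → Polynomial (Polynomial K))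
    (B : ℕ → Matrix (Fin n) (Fin n) (Polynomial (Polynomial K))) :
    (∃! f : Fin n → PowerSeries (Polynomial K),
        ∀ p, f p = (a p : PowerSeries (Polynomial K)) +
          PowerSeries.X * ∑ i ∈ Finset.range (k + 1), ∑ l,
            (B i p l : PowerSeries (Polynomial K)) * seriesDelta^[i] (f l)) ∧
    ∀ f : Fin n → PowerSeries (Polynomial K),
      (∀ p, f p = (a p : PowerSeries (Polynomial K)) +
          PowerSeries.X * ∑ i ∈ Finset.range (k + 1), ∑ l,
            (B i p l : PowerSeries (Polynomial K)) * seriesDelta^[i] (f l)) →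
      (∀ p, PowerSeries.coeff 0 (f p) = (a p).coeff 0) ∧
      ∀ N : ℕ, ∀ p, PowerSeries.coeff (N + 1) (f p) = (a p).coeff (N + 1) +
        ∑ i ∈ Finset.range (k + 1), ∑ j ∈ Finset.range (N + 1), ∑ l,
          (B i p l).coeff j * (Polynomial.divX)^[i] (PowerSeries.coeff (N - j) (f l)) := by
  -- any solution satisfies the recursion
  have hrec : ∀ f : Fin n → PowerSeries (Polynomial K),
      (∀ p, f p = (a p : PowerSeries (Polynomial K)) +
          PowerSeries.X * ∑ i ∈ Finset.range (k + 1), ∑ l,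
            (B i p l : PowerSeries (Polynomial K)) * seriesDelta^[i] (f l)) →
      (∀ p, PowerSeries.coeff 0 (f p) = (a p).coeff 0) ∧
      ∀ N : ℕ, ∀ p, PowerSeries.coeff (N + 1) (f p) = (a p).coeff (N + 1) +
        ∑ i ∈ Finset.range (k + 1), ∑ j ∈ Finset.range (N + 1), ∑ l,
          (B i p l).coeff j * (Polynomial.divX)^[i] (PowerSeries.coeff (N - j) (f l)) := by
    intro f hf
    constructor
    · intro p; rw [hf p]; exact coeff_rhs_zero k a B f p
    · intro N p; rw [hf p]; exact coeff_rhs_succ k a B f p N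
  refine ⟨⟨fun p => PowerSeries.mk fun N => solCoeff k a B N p, ?_, ?_⟩, hrec⟩
  · -- the constructed series is a solution
    intro p
    ext N
    cases N with
    | zero => rw [coeff_rhs_zero]; simp [solCoeff]
    | succ N =>
      rw [coeff_rhs_succ]
      simp only [PowerSeries.coeff_mk]
      rw [solCoeff]
  · -- uniqueness
    intro g hg
    have : ∀ N : ℕ, ∀ p, PowerSeries.coeff N (g p) = solCoeff k a B N p := by
      intro N
      induction N using Nat.strong_induction_on with
      | _ N ih =>
        intro p
        cases N with
        | zero => rw [(hrec g hg).1 p]; simp [solCoeff]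
        | succ N =>
          rw [(hrec g hg).2 N p, solCoeff]
          congr 1
          refine Finset.sum_congr rfl fun i _ => Finset.sum_congr rfl fun j hj =>
            Finset.sum_congr rfl fun l _ => ?_
          rw [ih (N - j) (Nat.lt_succ_of_le (Nat.sub_le N j)) l]
    funext p
    ext N
    rw [this N p, PowerSeries.coeff_mk]
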